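/- arXiv:1809.09479 — 2 statements merged into one kernel-verified Lean document; each statement's English description precedes it below -/
import Mathlib

section
/- Let A ≤ B ≤ C be groups and λ an ordinal such that C_C^α(A) = Z_α(C) for all α ≤ λ. Then for all α ≤ λ, C_B^α(A) = Z_α(B) = Z_α(C) ∩ B. -/
open Ordinal

section Defs
variable {G : Type*} [Group G]

attribute [local instance] Classical.propDecidable

/-- The commutator `[x,y] = x⁻¹y⁻¹xy` as in the paper. -/
def pcomm (x y : G) : G := x⁻¹ * y⁻¹ * x * y

/-- Transfinite upper central series of the (sub)set `E` of `G`, viewed inside `G`. -/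
noncomputable def ZSet (E : Set G) (α : Ordinal) : Set G :=
  if α = 0 then {1}
  else if hs : ∃ β < α, α = β + 1 then
    {x | x ∈ E ∧ ∀ g ∈ E, pcomm x g ∈ ZSet E hs.choose}
  else ⋃ (β : Ordinal) (_ : β < α), ZSet E β
termination_by α
decreasing_by all_goals first | assumption | exact hs.choose_spec.1

/-- Transfinite iterated centralizers `C_E^α(H)` of `H` inside the ambient set `E ⊆ G`. -/
noncomputable def CIter (E H : Set G) (α : Ordinal) : Set G :=
  if α = 0 then {1}
  else if hs : ∃ β < α, α = β + 1 then
    {x | x ∈ E ∧ (∀ β < α, ∀ a : G, a ∈ CIter E H β ↔ x * a * x⁻¹ ∈ CIter E H β)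
       ∧ ∀ h ∈ H, pcomm x h ∈ CIter E H hs.choose}
  else ⋃ (β : Ordinal) (_ : β < α), CIter E H β
termination_by α
decreasing_by all_goals first | assumption | exact hs.choose_spec.1

/-- Transfinite envelopes `E_α(H)` of `H ⊆ G`. -/
noncomputable def Env (H : Set G) (α : Ordinal) : Set G :=
  if α = 0 then Set.univ
  else if hs : ∃ β < α, α = β + 1 then
    {g | g ∈ Env H hs.choose ∧
      ∀ c ∈ CIter (Env H hs.choose) H (hs.choose + 1),
        pcomm g c ∈ CIter (Env H hs.choose) H hs.choose}
  else ⋂ (β : Ordinal) (_ : β < α), Env H β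
termination_by α
decreasing_by all_goals first | assumption | exact hs.choose_spec.1

end Defs


section Aux
variable {G : Type*} [Group G]

lemma ZSet_zero (E : Set G) : ZSet E 0 = {1} := by rw [ZSet]; simp

lemma ZSet_succ (E : Set G) (β : Ordinal) :
    ZSet E (β + 1) = {x | x ∈ E ∧ ∀ g ∈ E, pcomm x g ∈ ZSet E β} := by
  have hne : (β + 1 : Ordinal) ≠ 0 := by
    rw [Ordinal.add_one_eq_succ]; exact (Order.succ_ne_bot β)
  have hlt : β < β + 1 := by
    rw [Ordinal.add_one_eq_succ]; exact Order.lt_succ β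
  have hs : ∃ γ < β + 1, β + 1 = γ + 1 := ⟨β, hlt, rfl⟩
  rw [ZSet, if_neg hne, dif_pos hs]
  have hc : hs.choose = β := by
    have h2 := hs.choose_spec.2
    exact Order.succ_injective (by rw [← Ordinal.add_one_eq_succ, ← Ordinal.add_one_eq_succ]; exact h2.symm)
  rw [hc]

lemma ZSet_limit (E : Set G) {α : Ordinal} (h0 : α ≠ 0) (hs : ¬∃ β < α, α = β + 1) :
    ZSet E α = ⋃ (β : Ordinal) (_ : β < α), ZSet E β := by
  rw [ZSet, if_neg h0, dif_neg hs]

lemma CIter_zero (E H : Set G) : CIter E H 0 = {1} := by rw [CIter]; simp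

lemma CIter_succ (E H : Set G) (β : Ordinal) :
    CIter E H (β + 1) =
      {x | x ∈ E ∧ (∀ γ < β + 1, ∀ a : G, a ∈ CIter E H γ ↔ x * a * x⁻¹ ∈ CIter E H γ)
        ∧ ∀ h ∈ H, pcomm x h ∈ CIter E H β} := by
  have hne : (β + 1 : Ordinal) ≠ 0 := by
    rw [Ordinal.add_one_eq_succ]; exact (Order.succ_ne_bot β)
  have hlt : β < β + 1 := by
    rw [Ordinal.add_one_eq_succ]; exact Order.lt_succ β
  have hs : ∃ γ < β + 1, β + 1 = γ + 1 := ⟨β, hlt, rfl⟩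
  rw [CIter, if_neg hne, dif_pos hs]
  have hc : hs.choose = β := by
    have h2 := hs.choose_spec.2
    exact Order.succ_injective (by rw [← Ordinal.add_one_eq_succ, ← Ordinal.add_one_eq_succ]; exact h2.symm)
  rw [hc]

lemma CIter_limit (E H : Set G) {α : Ordinal} (h0 : α ≠ 0) (hs : ¬∃ β < α, α = β + 1) :
    CIter E H α = ⋃ (β : Ordinal) (_ : β < α), CIter E H β := by
  rw [CIter, if_neg h0, dif_neg hs]

lemma pcomm_conj (x a g : G) : pcomm (x * a * x⁻¹) g = x * pcomm a (x⁻¹ * g * x) * x⁻¹ := by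
  simp only [pcomm]; group

lemma ZSet_univ_conj : ∀ (α : Ordinal) (x a : G),
    a ∈ ZSet (Set.univ : Set G) α ↔ x * a * x⁻¹ ∈ ZSet (Set.univ : Set G) α := by
  intro α
  induction α using Ordinal.induction with
  | h α IH =>
    have key : ∀ x a : G, a ∈ ZSet (Set.univ : Set G) α →
        x * a * x⁻¹ ∈ ZSet (Set.univ : Set G) α := by
      intro x a ha
      rcases eq_or_ne α 0 with rfl | h0
      · rw [ZSet_zero] at ha ⊢
        simp only [Set.mem_singleton_iff] at ha ⊢
        simp [ha]
      by_cases hs : ∃ β < α, α = β + 1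
      · obtain ⟨β, hβ, rfl⟩ := hs
        rw [ZSet_succ] at ha ⊢
        refine ⟨trivial, fun g _ => ?_⟩
        rw [pcomm_conj]
        exact (IH β hβ x _).mp (ha.2 _ trivial)
      · rw [ZSet_limit _ h0 hs] at ha ⊢
        simp only [Set.mem_iUnion] at ha ⊢
        obtain ⟨β, hβ, hmem⟩ := ha
        exact ⟨β, hβ, (IH β hβ x a).mp hmem⟩
    intro x a
    constructor
    · exact key x a
    · intro hmem
      have := key x⁻¹ _ hmem
      have heq : x⁻¹ * (x * a * x⁻¹) * x⁻¹⁻¹ = a := by group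
      rwa [heq] at this

end Aux

theorem stmt6 {C : Type*} [Group C] (A B : Subgroup C) (hAB : A ≤ B) (lam : Ordinal)
    (h : ∀ α ≤ lam, CIter (Set.univ : Set C) (A : Set C) α = ZSet (Set.univ : Set C) α) :
    ∀ α ≤ lam,
      CIter (B : Set C) (A : Set C) α = ZSet (B : Set C) α ∧
      ZSet (B : Set C) α = ZSet (Set.univ : Set C) α ∩ (B : Set C) := by
  intro α
  induction α using Ordinal.induction with
  | h α IH =>
    intro hα
    rcases eq_or_ne α 0 with rfl | h0
    · rw [CIter_zero, ZSet_zero, ZSet_zero]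
      refine ⟨rfl, ?_⟩
      ext x
      simp only [Set.mem_singleton_iff, Set.mem_inter_iff, SetLike.mem_coe]
      exact ⟨fun hx => ⟨hx, hx ▸ B.one_mem⟩, fun hx => hx.1⟩
    by_cases hs : ∃ β < α, α = β + 1
    · obtain ⟨β, hβ, rfl⟩ := hs
      have hβlam : β ≤ lam := le_of_lt (lt_of_lt_of_le hβ hα)
      have IHβ := IH β hβ hβlam
      -- inclusion 1 : ZU (β+1) ∩ B ⊆ ZB (β+1)
      have h1 : ZSet (Set.univ : Set C) (β + 1) ∩ (B : Set C) ⊆ ZSet (B : Set C) (β + 1) := by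
        rintro x ⟨hxZ, hxB⟩
        rw [ZSet_succ] at hxZ ⊢
        refine ⟨hxB, fun g hg => ?_⟩
        have hBmem : pcomm x g ∈ B := by
          have hxB' : x ∈ B := hxB
          have hg' : g ∈ B := hg
          exact mul_mem (mul_mem (mul_mem (inv_mem hxB') (inv_mem hg')) hxB') hg'
        rw [IHβ.2]
        exact ⟨hxZ.2 g trivial, hBmem⟩
      -- inclusion 2 : ZB (β+1) ⊆ CB (β+1)
      have h2 : ZSet (B : Set C) (β + 1) ⊆ CIter (B : Set C) (A : Set C) (β + 1) := by
        intro x hx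
        rw [ZSet_succ] at hx
        rw [CIter_succ]
        refine ⟨hx.1, fun γ hγ a => ?_, fun a ha => ?_⟩
        · have hγlam : γ ≤ lam := le_of_lt (lt_of_lt_of_le hγ hα)
          have IHγ := IH γ hγ hγlam
          rw [IHγ.1, IHγ.2]
          have hxB : x ∈ B := hx.1
          constructor
          · rintro ⟨haZ, haB⟩
            refine ⟨(ZSet_univ_conj γ x a).mp haZ, ?_⟩
            exact mul_mem (mul_mem hxB haB) (inv_mem hxB)
          · rintro ⟨haZ, haB⟩
            refine ⟨(ZSet_univ_conj γ x a).mpr haZ, ?_⟩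
            have : x⁻¹ * (x * a * x⁻¹) * x ∈ B :=
              mul_mem (mul_mem (inv_mem hxB) haB) hxB
            have heq : x⁻¹ * (x * a * x⁻¹) * x = a := by group
            rwa [heq] at this
        · rw [IHβ.1]
          exact hx.2 a (hAB ha)
      -- inclusion 3 : CB (β+1) ⊆ ZU (β+1) ∩ B
      have h3 : CIter (B : Set C) (A : Set C) (β + 1) ⊆
          ZSet (Set.univ : Set C) (β + 1) ∩ (B : Set C) := by
        intro x hx
        rw [CIter_succ] at hx
        obtain ⟨hxB, _, hcomm⟩ := hx
        refine ⟨?_, hxB⟩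
        rw [← h (β + 1) hα, CIter_succ]
        refine ⟨trivial, fun γ hγ a => ?_, fun a ha => ?_⟩
        · have hγlam : γ ≤ lam := le_of_lt (lt_of_lt_of_le hγ hα)
          rw [h γ hγlam]
          exact ZSet_univ_conj γ x a
        · rw [h β hβlam]
          have := hcomm a ha
          rw [IHβ.1, IHβ.2] at this
          exact this.1
      constructor
      · exact Set.Subset.antisymm (h3.trans h1) h2
      · exact Set.Subset.antisymm (h2.trans h3) h1
    · rw [ZSet_limit _ h0 hs, ZSet_limit _ h0 hs, CIter_limit _ _ h0 hs]
      constructor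
      · ext x
        simp only [Set.mem_iUnion]
        constructor
        · rintro ⟨β, hβ, hmem⟩
          exact ⟨β, hβ, ((IH β hβ (le_of_lt (lt_of_lt_of_le hβ hα))).1) ▸ hmem⟩
        · rintro ⟨β, hβ, hmem⟩
          exact ⟨β, hβ, ((IH β hβ (le_of_lt (lt_of_lt_of_le hβ hα))).1).symm ▸ hmem⟩
      · ext x
        simp only [Set.mem_iUnion, Set.mem_inter_iff]
        constructor
        · rintro ⟨β, hβ, hmem⟩
          rw [(IH β hβ (le_of_lt (lt_of_lt_of_le hβ hα))).2] at hmem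
          exact ⟨⟨β, hβ, hmem.1⟩, hmem.2⟩
        · rintro ⟨⟨β, hβ, hmem⟩, hxB⟩
          refine ⟨β, hβ, ?_⟩
          rw [(IH β hβ (le_of_lt (lt_of_lt_of_le hβ hα))).2]
          exact ⟨hmem, hxB⟩
end

section
/- Let G be a group and H ≤ G. For all ordinals α ≤ λ, Z_α(E_α(H)) ≤ Z_λ(E_λ(H)). -/
open Ordinal

section Defs
variable {G : Type*} [Group G]

attribute [local instance] Classical.propDecidable

end Defs

namespace Stmt12Aux

/-! ### Ordinal helpers -/

lemma succ_ne_zero' (β : Ordinal) : β + 1 ≠ 0 := by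
  rw [Ordinal.add_one_eq_succ]; exact Order.succ_ne_bot β

lemma lt_succ' (β : Ordinal) : β < β + 1 := by
  rw [Ordinal.add_one_eq_succ]; exact Order.lt_succ β

lemma lt_succ_iff' {a b : Ordinal} : a < b + 1 ↔ a ≤ b := by
  rw [Ordinal.add_one_eq_succ]; exact Order.lt_succ_iff

lemma le_succ' (β : Ordinal) : β ≤ β + 1 := (lt_succ' β).le

lemma succ_le_succ_iff' {a b : Ordinal} : a + 1 ≤ b + 1 ↔ a ≤ b := by
  rw [Ordinal.add_one_eq_succ, Ordinal.add_one_eq_succ]; exact Order.succ_le_succ_iff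

lemma exists_pred_succ (β : Ordinal) : ∃ γ < β + 1, β + 1 = γ + 1 :=
  ⟨β, lt_succ' β, rfl⟩

lemma choose_eq (β : Ordinal) (hs : ∃ γ < β + 1, β + 1 = γ + 1) : hs.choose = β := by
  have h2 : β + 1 = hs.choose + 1 := hs.choose_spec.2
  have h3 : Order.succ β = Order.succ hs.choose := by
    rw [← Ordinal.add_one_eq_succ, ← Ordinal.add_one_eq_succ]; exact h2
  exact (Order.succ_injective h3).symm

lemma pos_of_ne_zero {α : Ordinal} (h : α ≠ 0) : 0 < α :=
  pos_iff_ne_zero.mpr h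

lemma succ_lt_of_limit {α γ : Ordinal} (h0 : α ≠ 0) (hs : ¬∃ β < α, α = β + 1)
    (hγ : γ < α) : γ + 1 < α := by
  have h1 : γ + 1 ≤ α := by
    rw [Ordinal.add_one_eq_succ]; exact Order.succ_le_of_lt hγ
  rcases h1.lt_or_eq with h | h
  · exact h
  · exact absurd ⟨γ, hγ, h.symm⟩ hs

variable {G : Type*} [Group G]

/-! ### pcomm identities -/

lemma pcomm_one_left (y : G) : pcomm (1 : G) y = 1 := by simp [pcomm]

lemma pcomm_one_right (x : G) : pcomm x (1 : G) = 1 := by simp [pcomm]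

lemma pcomm_swap (x y : G) : pcomm y x = (pcomm x y)⁻¹ := by simp only [pcomm]; group

/-! ### Subgroup-set predicate -/

def SubG (E : Set G) : Prop :=
  (1 : G) ∈ E ∧ (∀ ⦃x : G⦄, x ∈ E → x⁻¹ ∈ E) ∧ ∀ ⦃x y : G⦄, x ∈ E → y ∈ E → x * y ∈ E

lemma SubG.univ : SubG (Set.univ : Set G) :=
  ⟨trivial, fun _ _ => trivial, fun _ _ _ _ => trivial⟩

lemma SubG.singleton : SubG ({1} : Set G) := by
  refine ⟨rfl, ?_, ?_⟩ <;> intro x <;> simp_all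

/-! ### Equation lemmas -/

lemma ZSet_zero (E : Set G) : ZSet E 0 = {1} := by rw [ZSet]; simp

lemma ZSet_succ (E : Set G) (β : Ordinal) :
    ZSet E (β + 1) = {x | x ∈ E ∧ ∀ g ∈ E, pcomm x g ∈ ZSet E β} := by
  rw [ZSet, if_neg (succ_ne_zero' β), dif_pos (exists_pred_succ β), choose_eq β _]

lemma ZSet_limit {α : Ordinal} (h0 : α ≠ 0) (hs : ¬∃ β < α, α = β + 1) (E : Set G) :
    ZSet E α = ⋃ (β : Ordinal) (_ : β < α), ZSet E β := by
  rw [ZSet, if_neg h0, dif_neg hs]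

lemma mem_ZSet_limit {α : Ordinal} (h0 : α ≠ 0) (hs : ¬∃ β < α, α = β + 1) {E : Set G}
    {x : G} : x ∈ ZSet E α ↔ ∃ β < α, x ∈ ZSet E β := by
  rw [ZSet_limit h0 hs]; simp

lemma CIter_zero (E H : Set G) : CIter E H 0 = {1} := by rw [CIter]; simp

lemma CIter_succ (E H : Set G) (β : Ordinal) :
    CIter E H (β + 1) = {x | x ∈ E ∧
      (∀ γ < β + 1, ∀ a : G, a ∈ CIter E H γ ↔ x * a * x⁻¹ ∈ CIter E H γ)
      ∧ ∀ h ∈ H, pcomm x h ∈ CIter E H β} := by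
  rw [CIter, if_neg (succ_ne_zero' β), dif_pos (exists_pred_succ β), choose_eq β _]

lemma mem_CIter_succ {E H : Set G} {β : Ordinal} {x : G} :
    x ∈ CIter E H (β + 1) ↔ x ∈ E ∧
      (∀ γ < β + 1, ∀ a : G, a ∈ CIter E H γ ↔ x * a * x⁻¹ ∈ CIter E H γ)
      ∧ ∀ h ∈ H, pcomm x h ∈ CIter E H β := by
  rw [CIter_succ]; rfl

lemma CIter_limit {α : Ordinal} (h0 : α ≠ 0) (hs : ¬∃ β < α, α = β + 1) (E H : Set G) :
    CIter E H α = ⋃ (β : Ordinal) (_ : β < α), CIter E H β := by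
  rw [CIter, if_neg h0, dif_neg hs]

lemma mem_CIter_limit {α : Ordinal} (h0 : α ≠ 0) (hs : ¬∃ β < α, α = β + 1) {E H : Set G}
    {x : G} : x ∈ CIter E H α ↔ ∃ β < α, x ∈ CIter E H β := by
  rw [CIter_limit h0 hs]; simp

lemma Env_zero (H : Set G) : Env H 0 = Set.univ := by rw [Env]; simp

lemma Env_succ (H : Set G) (β : Ordinal) :
    Env H (β + 1) = {g | g ∈ Env H β ∧
      ∀ c ∈ CIter (Env H β) H (β + 1), pcomm g c ∈ CIter (Env H β) H β} := by
  rw [Env, if_neg (succ_ne_zero' β), dif_pos (exists_pred_succ β), choose_eq β _]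

lemma mem_Env_succ {H : Set G} {β : Ordinal} {x : G} :
    x ∈ Env H (β + 1) ↔ x ∈ Env H β ∧
      ∀ c ∈ CIter (Env H β) H (β + 1), pcomm x c ∈ CIter (Env H β) H β := by
  rw [Env_succ]; rfl

lemma Env_limit {α : Ordinal} (h0 : α ≠ 0) (hs : ¬∃ β < α, α = β + 1) (H : Set G) :
    Env H α = ⋂ (β : Ordinal) (_ : β < α), Env H β := by
  rw [Env, if_neg h0, dif_neg hs]

lemma mem_Env_limit {α : Ordinal} (h0 : α ≠ 0) (hs : ¬∃ β < α, α = β + 1) {H : Set G}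
    {x : G} : x ∈ Env H α ↔ ∀ β < α, x ∈ Env H β := by
  rw [Env_limit h0 hs]; simp

/-! ### basic CIter facts -/

lemma oneC {E H : Set G} (h1 : (1 : G) ∈ E) : ∀ α, (1 : G) ∈ CIter E H α := by
  intro α
  induction α using Ordinal.induction with
  | _ α IH =>
    by_cases h0 : α = 0
    · subst h0; rw [CIter_zero]; rfl
    by_cases hs : ∃ β < α, α = β + 1
    · obtain ⟨β, hβ, rfl⟩ := hs
      refine mem_CIter_succ.mpr ⟨h1, ?_, ?_⟩
      · intro γ _ a; simp
      · intro h _; rw [pcomm_one_left]; exact IH β hβ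
    · exact (mem_CIter_limit h0 hs).mpr ⟨0, pos_of_ne_zero h0, by rw [CIter_zero]; rfl⟩

lemma CsubE {E H : Set G} (h1 : (1 : G) ∈ E) : ∀ α, CIter E H α ⊆ E := by
  intro α
  induction α using Ordinal.induction with
  | _ α IH =>
    by_cases h0 : α = 0
    · subst h0; rw [CIter_zero]; intro x hx
      rw [Set.mem_singleton_iff] at hx; subst hx; exact h1
    by_cases hs : ∃ β < α, α = β + 1
    · obtain ⟨β, hβ, rfl⟩ := hs
      intro x hx; exact (mem_CIter_succ.mp hx).1
    · intro x hx
      obtain ⟨β, hβ, hx⟩ := (mem_CIter_limit h0 hs).mp hx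
      exact IH β hβ hx



section Master
variable {G : Type*} [Group G] {E H : Set G}

lemma conj_iff_comp {S : Set G} {x y : G}
    (hx : ∀ a : G, a ∈ S ↔ x * a * x⁻¹ ∈ S) (hy : ∀ a : G, a ∈ S ↔ y * a * y⁻¹ ∈ S) :
    ∀ a : G, a ∈ S ↔ (x * y) * a * (x * y)⁻¹ ∈ S := by
  intro a
  rw [show (x * y) * a * (x * y)⁻¹ = x * (y * a * y⁻¹) * x⁻¹ by group]
  exact (hy a).trans (hx _)

lemma conj_iff_inv {S : Set G} {x : G}
    (hx : ∀ a : G, a ∈ S ↔ x * a * x⁻¹ ∈ S) :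
    ∀ a : G, a ∈ S ↔ x⁻¹ * a * x⁻¹⁻¹ ∈ S := by
  intro a
  rw [inv_inv]
  constructor
  · intro ha
    exact (hx _).mpr (by rw [show x * (x⁻¹ * a * x) * x⁻¹ = a by group]; exact ha)
  · intro ha
    have h2 := (hx _).mp ha
    rwa [show x * (x⁻¹ * a * x) * x⁻¹ = a by group] at h2

theorem Cmaster (hE : SubG E) : ∀ ℓ : Ordinal,
    (∀ ℓ' ≤ ℓ, CIter E H ℓ' ⊆ CIter E H ℓ)
    ∧ SubG (CIter E H ℓ)
    ∧ (∀ x ∈ CIter E H ℓ, ∀ a ∈ CIter E H ℓ, x * a * x⁻¹ ∈ CIter E H ℓ)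
    ∧ (∀ ρ < ℓ, ∀ x ∈ CIter E H ℓ, ∀ e ∈ CIter E H ρ, pcomm x e ∈ CIter E H ρ)
    ∧ (∀ β < ℓ, ∀ x ∈ CIter E H ℓ, ∀ a : G, a ∈ CIter E H β ↔ x * a * x⁻¹ ∈ CIter E H β)
    ∧ (∀ x ∈ CIter E H ℓ, ∀ h ∈ H, pcomm x h ∈ CIter E H ℓ) := by
  intro ℓ
  induction ℓ using Ordinal.induction with
  | _ ℓ IH =>
  by_cases h0 : ℓ = 0
  · subst h0
    refine ⟨?_, ?_, ?_, ?_, ?_, ?_⟩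
    · intro ℓ' hℓ'; rw [nonpos_iff_eq_zero.mp hℓ']
    · rw [CIter_zero]; exact SubG.singleton
    · rw [CIter_zero]; intro x hx a ha
      rw [Set.mem_singleton_iff] at hx ha ⊢; subst hx; subst ha; group
    · intro ρ hρ; exact absurd hρ (not_lt_of_ge (zero_le (a := ρ)))
    · intro β hβ; exact absurd hβ (not_lt_of_ge (zero_le (a := β)))
    · rw [CIter_zero]; intro x hx h _
      rw [Set.mem_singleton_iff] at hx ⊢; subst hx; rw [pcomm_one_left]
  by_cases hsx : ∃ β < ℓ, ℓ = β + 1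
  · obtain ⟨β, hβ, rfl⟩ := hsx
    obtain ⟨monoβ, sgβ, snβ, _, ciβ, hcβ⟩ := IH β hβ
    -- step : C β ⊆ C (β+1)
    have step : CIter E H β ⊆ CIter E H (β + 1) := by
      intro x hx
      refine mem_CIter_succ.mpr ⟨CsubE hE.1 β hx, ?_, ?_⟩
      · intro γ hγ a
        rcases (lt_succ_iff'.mp hγ).lt_or_eq with hγβ | hγβ
        · exact ciβ γ hγβ x hx a
        · subst hγβ
          constructor
          · intro ha; exact snβ x hx a ha
          · intro ha
            have h2 := snβ x⁻¹ (sgβ.2.1 hx) _ ha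
            rwa [show x⁻¹ * (x * a * x⁻¹) * x⁻¹⁻¹ = a by group] at h2
      · intro h hh; exact hcβ x hx h hh
    have mono : ∀ ℓ' ≤ β + 1, CIter E H ℓ' ⊆ CIter E H (β + 1) := by
      intro ℓ' hℓ'
      rcases hℓ'.lt_or_eq with h | h
      · exact (monoβ ℓ' (lt_succ_iff'.mp h)).trans step
      · rw [h]
    -- V' at level β+1
    have V : ∀ ρ < β + 1, ∀ x ∈ CIter E H (β + 1), ∀ e ∈ CIter E H ρ,
        pcomm x e ∈ CIter E H ρ := by
      intro ρ
      induction ρ using Ordinal.induction with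
      | _ ρ ihρ =>
      intro hρ x hx e he
      obtain ⟨hxE, hxci, hxh⟩ := mem_CIter_succ.mp hx
      by_cases hρ0 : ρ = 0
      · subst hρ0; rw [CIter_zero] at he ⊢
        rw [Set.mem_singleton_iff] at he ⊢; subst he; rw [pcomm_one_right]
      by_cases hρs : ∃ ρ' < ρ, ρ = ρ' + 1
      · obtain ⟨ρ', hρ', rfl⟩ := hρs
        obtain ⟨_, sgρ', _, _, _, _⟩ := IH ρ' (hρ'.trans hρ)
        have hu : x⁻¹ * e * x ∈ CIter E H (ρ' + 1) := by
          refine (hxci _ hρ _).mpr ?_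
          rwa [show x * (x⁻¹ * e * x) * x⁻¹ = e by group]
        obtain ⟨huE, huci, huh⟩ := mem_CIter_succ.mp hu
        obtain ⟨heE, heci, heh⟩ := mem_CIter_succ.mp he
        have hweq : pcomm x e = (x⁻¹ * e * x)⁻¹ * e := by simp only [pcomm]; group
        refine mem_CIter_succ.mpr ⟨?_, ?_, ?_⟩
        · rw [hweq]
          exact hE.2.2 (hE.2.1 huE) heE
        · rw [hweq]
          intro γ hγ
          exact conj_iff_comp (conj_iff_inv (huci γ hγ)) (heci γ hγ)
        · intro h hh
          have hid : pcomm (pcomm x e) h =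
              (e⁻¹ * ((x⁻¹ * e * x) * (pcomm (x⁻¹ * e * x) h)⁻¹ * (x⁻¹ * e * x)⁻¹) * e) *
                pcomm e h := by
            simp only [pcomm]; group
          rw [hid]
          have m1 : (pcomm (x⁻¹ * e * x) h)⁻¹ ∈ CIter E H ρ' := sgρ'.2.1 (huh h hh)
          have m2 := (huci ρ' (lt_succ' ρ') _).mp m1
          have m3 : e⁻¹ * ((x⁻¹ * e * x) * (pcomm (x⁻¹ * e * x) h)⁻¹ * (x⁻¹ * e * x)⁻¹) * e
              ∈ CIter E H ρ' := by
            refine (heci ρ' (lt_succ' ρ') _).mpr ?_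
            rwa [show e * (e⁻¹ * ((x⁻¹ * e * x) * (pcomm (x⁻¹ * e * x) h)⁻¹ *
              (x⁻¹ * e * x)⁻¹) * e) * e⁻¹ = (x⁻¹ * e * x) * (pcomm (x⁻¹ * e * x) h)⁻¹ *
              (x⁻¹ * e * x)⁻¹ by group]
          exact sgρ'.2.2 m3 (heh h hh)
      · obtain ⟨ρ'', hρ'', he''⟩ := (mem_CIter_limit hρ0 hρs).mp he
        exact (mem_CIter_limit hρ0 hρs).mpr
          ⟨ρ'', hρ'', ihρ ρ'' hρ'' (hρ''.trans hρ) x hx e he''⟩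
    -- SN at level β+1
    have SN : ∀ x ∈ CIter E H (β + 1), ∀ a ∈ CIter E H (β + 1),
        x * a * x⁻¹ ∈ CIter E H (β + 1) := by
      intro x hx a ha
      obtain ⟨hxE, hxci, hxh⟩ := mem_CIter_succ.mp hx
      obtain ⟨haE, haci, hah⟩ := mem_CIter_succ.mp ha
      refine mem_CIter_succ.mpr ⟨hE.2.2 (hE.2.2 hxE haE) (hE.2.1 hxE), ?_, ?_⟩
      · intro γ hγ
        exact conj_iff_comp (conj_iff_comp (hxci γ hγ) (haci γ hγ)) (conj_iff_inv (hxci γ hγ))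
      · intro h hh
        have hid : pcomm (x * a * x⁻¹) h =
            x * (pcomm a (pcomm x h)⁻¹ * ((pcomm x h) * pcomm a h * (pcomm x h)⁻¹)) * x⁻¹ := by
          simp only [pcomm]; group
        rw [hid]
        have m1 : pcomm a (pcomm x h)⁻¹ ∈ CIter E H β :=
          V β (lt_succ' β) a ha _ (sgβ.2.1 (hxh h hh))
        have m2 : (pcomm x h) * pcomm a h * (pcomm x h)⁻¹ ∈ CIter E H β :=
          snβ _ (hxh h hh) _ (hah h hh)
        exact (hxci β (lt_succ' β) _).mp (sgβ.2.2 m1 m2)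
    refine ⟨mono, ⟨oneC hE.1 _, ?_, ?_⟩, SN, V, ?_, ?_⟩
    · -- inverses
      intro x hx
      obtain ⟨hxE, hxci, hxh⟩ := mem_CIter_succ.mp hx
      refine mem_CIter_succ.mpr ⟨hE.2.1 hxE, ?_, ?_⟩
      · intro γ hγ; exact conj_iff_inv (hxci γ hγ)
      · intro h hh
        have hid : pcomm x⁻¹ h = x * (pcomm x h)⁻¹ * x⁻¹ := by simp only [pcomm]; group
        rw [hid]
        exact (hxci β (lt_succ' β) _).mp (sgβ.2.1 (hxh h hh))
    · -- products
      intro x y hx hy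
      obtain ⟨hxE, hxci, hxh⟩ := mem_CIter_succ.mp hx
      obtain ⟨hyE, hyci, hyh⟩ := mem_CIter_succ.mp hy
      refine mem_CIter_succ.mpr ⟨hE.2.2 hxE hyE, ?_, ?_⟩
      · intro γ hγ; exact conj_iff_comp (hxci γ hγ) (hyci γ hγ)
      · intro h hh
        have hid : pcomm (x * y) h = (y⁻¹ * pcomm x h * y) * pcomm y h := by
          simp only [pcomm]; group
        rw [hid]
        have m1 : y⁻¹ * pcomm x h * y ∈ CIter E H β := by
          refine (hyci β (lt_succ' β) _).mpr ?_
          rw [show y * (y⁻¹ * pcomm x h * y) * y⁻¹ = pcomm x h by group]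
          exact hxh h hh
        exact sgβ.2.2 m1 (hyh h hh)
    · -- conjIff
      intro γ hγ x hx a
      exact (mem_CIter_succ.mp hx).2.1 γ hγ a
    · -- Hcomm
      intro x hx h hh
      exact step ((mem_CIter_succ.mp hx).2.2 h hh)
  · -- limit case
    have hsuc : ∀ γ, γ < ℓ → γ + 1 < ℓ := fun γ hγ => succ_lt_of_limit h0 hsx hγ
    have memlim : ∀ {x : G}, x ∈ CIter E H ℓ ↔ ∃ β < ℓ, x ∈ CIter E H β :=
      fun {x} => mem_CIter_limit h0 hsx
    refine ⟨?_, ⟨oneC hE.1 _, ?_, ?_⟩, ?_, ?_, ?_, ?_⟩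
    · intro ℓ' hℓ'
      rcases hℓ'.lt_or_eq with h | h
      · intro x hx; exact memlim.mpr ⟨ℓ', h, hx⟩
      · rw [h]
    · intro x hx
      obtain ⟨γ, hγ, hx⟩ := memlim.mp hx
      exact memlim.mpr ⟨γ, hγ, (IH γ hγ).2.1.2.1 hx⟩
    · intro x y hx hy
      obtain ⟨γ₁, hγ₁, hx⟩ := memlim.mp hx
      obtain ⟨γ₂, hγ₂, hy⟩ := memlim.mp hy
      rcases le_total γ₁ γ₂ with hle | hle
      · exact memlim.mpr ⟨γ₂, hγ₂, (IH γ₂ hγ₂).2.1.2.2 ((IH γ₂ hγ₂).1 γ₁ hle hx) hy⟩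
      · exact memlim.mpr ⟨γ₁, hγ₁, (IH γ₁ hγ₁).2.1.2.2 hx ((IH γ₁ hγ₁).1 γ₂ hle hy)⟩
    · -- SN
      intro x hx a ha
      obtain ⟨γ₁, hγ₁, hx⟩ := memlim.mp hx
      obtain ⟨γ₂, hγ₂, ha⟩ := memlim.mp ha
      rcases le_total γ₁ γ₂ with hle | hle
      · exact memlim.mpr ⟨γ₂, hγ₂, (IH γ₂ hγ₂).2.2.1 x ((IH γ₂ hγ₂).1 γ₁ hle hx) a ha⟩
      · exact memlim.mpr ⟨γ₁, hγ₁, (IH γ₁ hγ₁).2.2.1 x hx a ((IH γ₁ hγ₁).1 γ₂ hle ha)⟩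
    · -- V'
      intro ρ hρ x hx e he
      obtain ⟨γ, hγ, hx⟩ := memlim.mp hx
      rcases lt_or_ge ρ γ with hc | hc
      · exact (IH γ hγ).2.2.2.1 ρ hc x hx e he
      · have hx' : x ∈ CIter E H (ρ + 1) :=
          (IH (ρ+1) (hsuc ρ hρ)).1 γ (hc.trans (le_succ' ρ)) hx
        exact (IH (ρ+1) (hsuc ρ hρ)).2.2.2.1 ρ (lt_succ' ρ) x hx' e he
    · -- conjIff
      intro γ hγ x hx a
      obtain ⟨γ₁, hγ₁, hx⟩ := memlim.mp hx
      rcases lt_or_ge γ γ₁ with hc | hc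
      · exact (IH γ₁ hγ₁).2.2.2.2.1 γ hc x hx a
      · have hx' : x ∈ CIter E H (γ + 1) :=
          (IH (γ+1) (hsuc γ hγ)).1 γ₁ (hc.trans (le_succ' γ)) hx
        exact (IH (γ+1) (hsuc γ hγ)).2.2.2.2.1 γ (lt_succ' γ) x hx' a
    · -- Hcomm
      intro x hx h hh
      obtain ⟨γ, hγ, hx⟩ := memlim.mp hx
      exact memlim.mpr ⟨γ, hγ, (IH γ hγ).2.2.2.2.2 x hx h hh⟩

end Master

section ZL
variable {G : Type*} [Group G] {E E' : Set G}

lemma mem_ZSet_succ {β : Ordinal} {x : G} :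
    x ∈ ZSet E (β + 1) ↔ x ∈ E ∧ ∀ g ∈ E, pcomm x g ∈ ZSet E β := by
  rw [ZSet_succ]; rfl

lemma mem_ZSet_zero {x : G} : x ∈ ZSet E 0 ↔ x = 1 := by
  rw [ZSet_zero]; exact Set.mem_singleton_iff

lemma ZsubE (h1 : (1 : G) ∈ E) : ∀ α, ZSet E α ⊆ E := by
  intro α
  induction α using Ordinal.induction with
  | _ α IH =>
    by_cases h0 : α = 0
    · subst h0; intro x hx; rw [mem_ZSet_zero] at hx; subst hx; exact h1
    by_cases hs : ∃ β < α, α = β + 1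
    · obtain ⟨β, hβ, rfl⟩ := hs; exact fun x hx => (mem_ZSet_succ.mp hx).1
    · intro x hx
      obtain ⟨β, hβ, hx⟩ := (mem_ZSet_limit h0 hs).mp hx
      exact IH β hβ hx

lemma Zstep (h1 : (1 : G) ∈ E) : ∀ α, ZSet E α ⊆ ZSet E (α + 1) := by
  intro α
  induction α using Ordinal.induction with
  | _ α IH =>
    by_cases h0 : α = 0
    · subst h0; intro x hx; rw [mem_ZSet_zero] at hx; subst hx
      exact mem_ZSet_succ.mpr ⟨h1, fun g _ => by
        rw [pcomm_one_left, mem_ZSet_zero]⟩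
    by_cases hs : ∃ β < α, α = β + 1
    · obtain ⟨β, hβ, rfl⟩ := hs
      intro x hx
      obtain ⟨hxE, hc⟩ := mem_ZSet_succ.mp hx
      exact mem_ZSet_succ.mpr ⟨hxE, fun g hg => IH β hβ (hc g hg)⟩
    · intro x hx
      obtain ⟨γ, hγ, hx⟩ := (mem_ZSet_limit h0 hs).mp hx
      obtain ⟨hxE, hc⟩ := mem_ZSet_succ.mp (IH γ hγ hx)
      exact mem_ZSet_succ.mpr ⟨hxE, fun g hg =>
        (mem_ZSet_limit h0 hs).mpr ⟨γ, hγ, hc g hg⟩⟩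

lemma Zmono (h1 : (1 : G) ∈ E) : ∀ β α, α ≤ β → ZSet E α ⊆ ZSet E β := by
  intro β
  induction β using Ordinal.induction with
  | _ β IH =>
    intro α hα
    by_cases h0 : β = 0
    · subst h0; rw [nonpos_iff_eq_zero.mp hα]
    by_cases hs : ∃ γ < β, β = γ + 1
    · obtain ⟨γ, hγ, rfl⟩ := hs
      rcases hα.lt_or_eq with h | h
      · exact (IH γ hγ α (lt_succ_iff'.mp h)).trans (Zstep h1 γ)
      · rw [h]
    · rcases hα.lt_or_eq with h | h
      · intro x hx; exact (mem_ZSet_limit h0 hs).mpr ⟨α, h, hx⟩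
      · rw [h]

lemma ZcommP : ∀ δ : Ordinal, δ ≠ 0 → ∀ {x g : G}, x ∈ ZSet E δ → g ∈ E →
    ∃ δ' < δ, pcomm x g ∈ ZSet E δ' := by
  intro δ
  induction δ using Ordinal.induction with
  | _ δ IH =>
    intro hδ x g hx hg
    by_cases hs : ∃ β < δ, δ = β + 1
    · obtain ⟨β, hβ, rfl⟩ := hs
      exact ⟨β, hβ, (mem_ZSet_succ.mp hx).2 g hg⟩
    · obtain ⟨γ, hγ, hx'⟩ := (mem_ZSet_limit hδ hs).mp hx
      by_cases hγ0 : γ = 0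
      · subst hγ0; rw [mem_ZSet_zero] at hx'; subst hx'
        exact ⟨0, pos_of_ne_zero hδ, by rw [pcomm_one_left, mem_ZSet_zero]⟩
      · obtain ⟨δ', hδ', h⟩ := IH γ hγ hγ0 hx' hg
        exact ⟨δ', hδ'.trans hγ, h⟩

lemma Zrestrict (h1' : (1 : G) ∈ E') (hsub : E' ⊆ E) :
    ∀ α, (∀ γ ≤ α, ZSet E γ ⊆ E') → ZSet E α ⊆ ZSet E' α := by
  intro α
  induction α using Ordinal.induction with
  | _ α IH =>
    intro hyp
    by_cases h0 : α = 0
    · subst h0; rw [ZSet_zero, ZSet_zero]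
    by_cases hs : ∃ β < α, α = β + 1
    · obtain ⟨β, hβ, rfl⟩ := hs
      intro x hx
      obtain ⟨_, hc⟩ := mem_ZSet_succ.mp hx
      refine mem_ZSet_succ.mpr ⟨hyp (β + 1) le_rfl hx, fun g hg => ?_⟩
      exact IH β hβ (fun γ hγ => hyp γ (hγ.trans (le_succ' β))) (hc g (hsub hg))
    · intro x hx
      obtain ⟨γ, hγ, hx'⟩ := (mem_ZSet_limit h0 hs).mp hx
      exact (mem_ZSet_limit h0 hs).mpr
        ⟨γ, hγ, IH γ hγ (fun γ' hγ' => hyp γ' (hγ'.trans hγ.le)) hx'⟩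

end ZL

section EnvL
variable {G : Type*} [Group G]

lemma EnvAnti (Hs : Set G) : ∀ α σ, σ ≤ α → Env Hs α ⊆ Env Hs σ := by
  intro α
  induction α using Ordinal.induction with
  | _ α IH =>
    intro σ hσ
    by_cases h0 : α = 0
    · subst h0; rw [nonpos_iff_eq_zero.mp hσ]
    by_cases hs : ∃ β < α, α = β + 1
    · obtain ⟨β, hβ, rfl⟩ := hs
      rcases hσ.lt_or_eq with h | h
      · intro x hx
        exact IH β hβ σ (lt_succ_iff'.mp h) (mem_Env_succ.mp hx).1
      · rw [h]
    · rcases hσ.lt_or_eq with h | h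
      · intro x hx; exact (mem_Env_limit h0 hs).mp hx σ h
      · rw [h]

lemma Fstar {E Hs : Set G} (hE : SubG E) (hH : Hs ⊆ E) {μ : Ordinal}
    (hnorm : ∀ ρ ≤ μ, ∀ g ∈ E, ∀ d ∈ CIter E Hs ρ, g * d * g⁻¹ ∈ CIter E Hs ρ) :
    ∀ δ b, δ ≤ b → b ≤ μ → ZSet E δ ⊆ CIter E Hs b := by
  intro δ
  induction δ using Ordinal.induction with
  | _ δ ihδ =>
    intro b
    induction b using Ordinal.induction with
    | _ b ihb =>
      intro hδb hbμ x hx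
      by_cases hb0 : b = 0
      · subst hb0
        rw [nonpos_iff_eq_zero.mp hδb, mem_ZSet_zero] at hx; subst hx
        exact oneC hE.1 0
      by_cases hbs : ∃ b' < b, b = b' + 1
      · obtain ⟨b', hb', rfl⟩ := hbs
        have hxE : x ∈ E := ZsubE hE.1 δ hx
        refine mem_CIter_succ.mpr ⟨hxE, ?_, ?_⟩
        · intro γ hγ a
          have hγμ : γ ≤ μ := (lt_of_lt_of_le hγ hbμ).le
          constructor
          · intro ha; exact hnorm γ hγμ x hxE a ha
          · intro ha
            have h2 := hnorm γ hγμ x⁻¹ (hE.2.1 hxE) _ ha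
            rwa [show x⁻¹ * (x * a * x⁻¹) * x⁻¹⁻¹ = a by group] at h2
        · intro h hh
          by_cases hδ0 : δ = 0
          · subst hδ0; rw [mem_ZSet_zero] at hx; subst hx
            rw [pcomm_one_left]; exact oneC hE.1 b'
          · obtain ⟨δ', hδ', hw⟩ := ZcommP δ hδ0 hx (hH hh)
            exact ihδ δ' hδ' b' (lt_succ_iff'.mp (lt_of_lt_of_le hδ' hδb))
              ((le_succ' b').trans hbμ) hw
      · rcases hδb.lt_or_eq with hlt | rfl
        · have h1 : δ + 1 < b := succ_lt_of_limit hb0 hbs hlt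
          exact (mem_CIter_limit hb0 hbs).mpr
            ⟨δ + 1, h1, ihb (δ + 1) h1 (le_succ' δ) (h1.le.trans hbμ) hx⟩
        · obtain ⟨δ'', hδ'', hx''⟩ := (mem_ZSet_limit hb0 hbs).mp hx
          exact ihδ δ'' hδ'' δ hδ''.le hbμ hx''

end EnvL

section Grand
variable {G : Type*} [Group G]

theorem grand (H : Subgroup G) : ∀ μ : Ordinal,
    SubG (Env (H : Set G) μ)
    ∧ (H : Set G) ⊆ Env (H : Set G) μ
    ∧ (∀ σ ≤ μ, ∀ β ≤ σ + 1,
        (CIter (Env (H : Set G) μ) (H : Set G) β ⊆ CIter (Env (H : Set G) σ) (H : Set G) β)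
        ∧ ∀ x ∈ CIter (Env (H : Set G) σ) (H : Set G) β, x ∈ Env (H : Set G) μ →
            x ∈ CIter (Env (H : Set G) μ) (H : Set G) β)
    ∧ (∀ γ, γ + 1 ≤ μ → ∀ g ∈ Env (H : Set G) μ,
        ∀ a ∈ CIter (Env (H : Set G) μ) (H : Set G) (γ + 1),
        pcomm g a ∈ CIter (Env (H : Set G) μ) (H : Set G) γ)
    ∧ (∀ ρ ≤ μ, ∀ g ∈ Env (H : Set G) μ, ∀ d ∈ CIter (Env (H : Set G) μ) (H : Set G) ρ,
        g * d * g⁻¹ ∈ CIter (Env (H : Set G) μ) (H : Set G) ρ)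
    ∧ (∀ α ≤ μ, ZSet (Env (H : Set G) α) α ⊆ ZSet (Env (H : Set G) μ) μ) := by
  intro μ
  induction μ using Ordinal.induction with
  | _ μ IH =>
  -- Part 1 : subgroup
  have sgE : SubG (Env (H : Set G) μ) := by
    by_cases h0 : μ = 0
    · subst h0; rw [Env_zero]; exact SubG.univ
    by_cases hs : ∃ β < μ, μ = β + 1
    · obtain ⟨β, hβ, rfl⟩ := hs
      obtain ⟨sgEβ, hHβ, restrβ, kstβ, normβ, mainβ⟩ := IH β hβ
      have CM := Cmaster (E := Env (H : Set G) β) (H := (H : Set G)) sgEβ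
      refine ⟨?_, ?_, ?_⟩
      · exact mem_Env_succ.mpr ⟨sgEβ.1, fun c _ => by
          rw [pcomm_one_left]; exact oneC sgEβ.1 β⟩
      · intro x hx
        obtain ⟨hxβ, hxp⟩ := mem_Env_succ.mp hx
        refine mem_Env_succ.mpr ⟨sgEβ.2.1 hxβ, ?_⟩
        intro c hc
        have hc' : c⁻¹ ∈ CIter (Env (H : Set G) β) (H : Set G) (β + 1) :=
          (CM (β + 1)).2.1.2.1 hc
        have hr : pcomm x c⁻¹ ∈ CIter (Env (H : Set G) β) (H : Set G) β := hxp c⁻¹ hc'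
        have hY : x * pcomm x c⁻¹ * x⁻¹ ∈ CIter (Env (H : Set G) β) (H : Set G) β :=
          normβ β le_rfl x hxβ _ hr
        have hfin : c⁻¹ * (x * pcomm x c⁻¹ * x⁻¹) * c ∈
            CIter (Env (H : Set G) β) (H : Set G) β := by
          refine ((mem_CIter_succ.mp hc).2.1 β (lt_succ' β) _).mpr ?_
          rwa [show c * (c⁻¹ * (x * pcomm x c⁻¹ * x⁻¹) * c) * c⁻¹ =
            x * pcomm x c⁻¹ * x⁻¹ by group]
        rwa [show pcomm x⁻¹ c = c⁻¹ * (x * pcomm x c⁻¹ * x⁻¹) * c by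
          simp only [pcomm]; group]
      · intro x y hx hy
        obtain ⟨hxβ, hxp⟩ := mem_Env_succ.mp hx
        obtain ⟨hyβ, hyp⟩ := mem_Env_succ.mp hy
        refine mem_Env_succ.mpr ⟨sgEβ.2.2 hxβ hyβ, ?_⟩
        intro c hc
        have m1 : y⁻¹ * pcomm x c * y⁻¹⁻¹ ∈ CIter (Env (H : Set G) β) (H : Set G) β :=
          normβ β le_rfl y⁻¹ (sgEβ.2.1 hyβ) _ (hxp c hc)
        rw [show pcomm (x * y) c = (y⁻¹ * pcomm x c * y⁻¹⁻¹) * pcomm y c by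
          simp only [pcomm]; group]
        exact (CM β).2.1.2.2 m1 (hyp c hc)
    · have memE : ∀ {x : G}, x ∈ Env (H : Set G) μ ↔ ∀ σ < μ, x ∈ Env (H : Set G) σ :=
        fun {x} => mem_Env_limit h0 hs
      refine ⟨?_, ?_, ?_⟩
      · exact memE.mpr fun σ hσ => ((IH σ hσ).1).1
      · intro x hx; exact memE.mpr fun σ hσ => ((IH σ hσ).1).2.1 (memE.mp hx σ hσ)
      · intro x y hx hy
        exact memE.mpr fun σ hσ => ((IH σ hσ).1).2.2 (memE.mp hx σ hσ) (memE.mp hy σ hσ)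
  -- Part 2 : H ⊆ Env μ
  have hHE : (H : Set G) ⊆ Env (H : Set G) μ := by
    by_cases h0 : μ = 0
    · subst h0; rw [Env_zero]; exact fun _ _ => trivial
    by_cases hs : ∃ β < μ, μ = β + 1
    · obtain ⟨β, hβ, rfl⟩ := hs
      obtain ⟨sgEβ, hHβ, _⟩ := IH β hβ
      intro h hh
      refine mem_Env_succ.mpr ⟨hHβ hh, ?_⟩
      intro c hc
      have h1 := (mem_CIter_succ.mp hc).2.2 h hh
      have h2 := (Cmaster sgEβ β).2.1.2.1 h1
      rwa [show pcomm h c = (pcomm c h)⁻¹ from pcomm_swap c h]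
    · intro h hh
      exact (mem_Env_limit h0 hs).mpr fun σ hσ => (IH σ hσ).2.1 hh
  -- Part 3 : restriction pair
  have restr : ∀ σ ≤ μ, ∀ β ≤ σ + 1,
      (CIter (Env (H : Set G) μ) (H : Set G) β ⊆ CIter (Env (H : Set G) σ) (H : Set G) β)
      ∧ ∀ x ∈ CIter (Env (H : Set G) σ) (H : Set G) β, x ∈ Env (H : Set G) μ →
          x ∈ CIter (Env (H : Set G) μ) (H : Set G) β := by
    intro σ hσ
    rcases hσ.lt_or_eq with hσlt | rfl
    swap
    · exact fun β _ => ⟨subset_rfl, fun x hx _ => hx⟩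
    obtain ⟨sgEσ, hHσ, _, _, normσ, _⟩ := IH σ hσlt
    have hanti : Env (H : Set G) μ ⊆ Env (H : Set G) σ := EnvAnti _ μ σ hσlt.le
    intro β
    induction β using Ordinal.induction with
    | _ β ihβ =>
    intro hβ
    by_cases hb0 : β = 0
    · subst hb0
      constructor
      · rw [CIter_zero, CIter_zero]
      · intro x hx _; rw [CIter_zero] at hx ⊢; exact hx
    by_cases hbs : ∃ ρ < β, β = ρ + 1
    · obtain ⟨ρ, hρ, rfl⟩ := hbs
      have hρσ1 : ρ ≤ σ + 1 := ((lt_succ' ρ).trans_le hβ).le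
      have hρσ : ρ ≤ σ := succ_le_succ_iff'.mp hβ
      constructor
      · intro x hx
        obtain ⟨hxE, hxci, hxh⟩ := mem_CIter_succ.mp hx
        refine mem_CIter_succ.mpr ⟨hanti hxE, ?_, ?_⟩
        · intro γ hγ a
          have hγσ : γ ≤ σ := (lt_succ_iff'.mp hγ).trans hρσ
          constructor
          · intro ha; exact normσ γ hγσ x (hanti hxE) a ha
          · intro ha
            have h2 := normσ γ hγσ x⁻¹ (sgEσ.2.1 (hanti hxE)) _ ha
            rwa [show x⁻¹ * (x * a * x⁻¹) * x⁻¹⁻¹ = a by group] at h2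
        · intro h hh
          exact ((ihβ ρ (lt_succ' ρ) hρσ1).1) (hxh h hh)
      · intro x hx hxμ
        obtain ⟨hxE, hxci, hxh⟩ := mem_CIter_succ.mp hx
        refine mem_CIter_succ.mpr ⟨hxμ, ?_, ?_⟩
        · intro γ hγ a
          have hγ' : γ ≤ σ + 1 := (hγ.trans_le hβ).le
          obtain ⟨dγ, uγ⟩ := ihβ γ hγ hγ'
          constructor
          · intro ha
            refine uγ _ ((hxci γ hγ a).mp (dγ ha)) ?_
            exact sgE.2.2 (sgE.2.2 hxμ (CsubE sgE.1 γ ha)) (sgE.2.1 hxμ)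
          · intro ha
            refine uγ a ((hxci γ hγ a).mpr (dγ ha)) ?_
            have h3 : x⁻¹ * (x * a * x⁻¹) * x ∈ Env (H : Set G) μ :=
              sgE.2.2 (sgE.2.2 (sgE.2.1 hxμ) (CsubE sgE.1 γ ha)) hxμ
            rwa [show x⁻¹ * (x * a * x⁻¹) * x = a by group] at h3
        · intro h hh
          refine (ihβ ρ (lt_succ' ρ) hρσ1).2 _ (hxh h hh) ?_
          have hhμ : h ∈ Env (H : Set G) μ := hHE hh
          show x⁻¹ * h⁻¹ * x * h ∈ Env (H : Set G) μ
          exact sgE.2.2 (sgE.2.2 (sgE.2.2 (sgE.2.1 hxμ) (sgE.2.1 hhμ)) hxμ) hhμ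
    · constructor
      · intro x hx
        obtain ⟨β', hβ', hx'⟩ := (mem_CIter_limit hb0 hbs).mp hx
        exact (mem_CIter_limit hb0 hbs).mpr
          ⟨β', hβ', (ihβ β' hβ' (hβ'.le.trans hβ)).1 hx'⟩
      · intro x hx hxμ
        obtain ⟨β', hβ', hx'⟩ := (mem_CIter_limit hb0 hbs).mp hx
        exact (mem_CIter_limit hb0 hbs).mpr
          ⟨β', hβ', (ihβ β' hβ' (hβ'.le.trans hβ)).2 _ hx' hxμ⟩
  -- Part 4 : boundary commutator property
  have kst : ∀ γ, γ + 1 ≤ μ → ∀ g ∈ Env (H : Set G) μ,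
      ∀ a ∈ CIter (Env (H : Set G) μ) (H : Set G) (γ + 1),
      pcomm g a ∈ CIter (Env (H : Set G) μ) (H : Set G) γ := by
    intro γ hγ1 g hg a ha
    have hγμ : γ < μ := (lt_succ' γ).trans_le hγ1
    have hdown := (restr γ hγμ.le (γ + 1) le_rfl).1 ha
    have hgγ1 : g ∈ Env (H : Set G) (γ + 1) := EnvAnti _ μ (γ + 1) hγ1 hg
    have hprop := (mem_Env_succ.mp hgγ1).2 _ hdown
    refine (restr γ hγμ.le γ (le_succ' γ)).2 _ hprop ?_
    have haE : a ∈ Env (H : Set G) μ := CsubE sgE.1 (γ + 1) ha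
    show g⁻¹ * a⁻¹ * g * a ∈ Env (H : Set G) μ
    exact sgE.2.2 (sgE.2.2 (sgE.2.2 (sgE.2.1 hg) (sgE.2.1 haE)) hg) haE
  -- Part 5 : normalization
  have norm : ∀ ρ ≤ μ, ∀ g ∈ Env (H : Set G) μ,
      ∀ d ∈ CIter (Env (H : Set G) μ) (H : Set G) ρ,
      g * d * g⁻¹ ∈ CIter (Env (H : Set G) μ) (H : Set G) ρ := by
    intro ρ
    induction ρ using Ordinal.induction with
    | _ ρ ihρ =>
    intro hρ g hg d hd
    by_cases h0 : ρ = 0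
    · subst h0; rw [CIter_zero] at hd ⊢
      rw [Set.mem_singleton_iff] at hd ⊢; subst hd; group
    by_cases hsρ : ∃ ς < ρ, ρ = ς + 1
    · obtain ⟨ς, hς, rfl⟩ := hsρ
      have CM := Cmaster (E := Env (H : Set G) μ) (H := (H : Set G)) sgE
      have ht : pcomm g⁻¹ d ∈ CIter (Env (H : Set G) μ) (H : Set G) ς :=
        kst ς hρ g⁻¹ (sgE.2.1 hg) d hd
      have ht3 : (pcomm g⁻¹ d)⁻¹ ∈ CIter (Env (H : Set G) μ) (H : Set G) (ς + 1) :=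
        (CM (ς + 1)).1 ς (le_succ' ς) ((CM ς).2.1.2.1 ht)
      have h4 := (CM (ς + 1)).2.1.2.2 hd ht3
      rwa [show g * d * g⁻¹ = d * (pcomm g⁻¹ d)⁻¹ by simp only [pcomm]; group]
    · obtain ⟨ρ', hρ', hd'⟩ := (mem_CIter_limit h0 hsρ).mp hd
      exact (mem_CIter_limit h0 hsρ).mpr
        ⟨ρ', hρ', ihρ ρ' hρ' (hρ'.le.trans hρ) g hg d hd'⟩
  -- Part 6 : Main
  have main : ∀ α ≤ μ, ZSet (Env (H : Set G) α) α ⊆ ZSet (Env (H : Set G) μ) μ := by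
    by_cases h0 : μ = 0
    · subst h0; intro α hα; rw [nonpos_iff_eq_zero.mp hα]
    by_cases hs : ∃ β < μ, μ = β + 1
    · obtain ⟨β, hβ, rfl⟩ := hs
      obtain ⟨sgEβ, hHβ, _, _, normβ, mainβ⟩ := IH β hβ
      have Zin : ZSet (Env (H : Set G) β) β ⊆ Env (H : Set G) (β + 1) := by
        intro z hz
        refine mem_Env_succ.mpr ⟨ZsubE sgEβ.1 β hz, ?_⟩
        intro c hc
        have hcE : c ∈ Env (H : Set G) β := CsubE sgEβ.1 (β + 1) hc
        by_cases hb0 : β = 0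
        · subst hb0; rw [mem_ZSet_zero] at hz; subst hz
          rw [pcomm_one_left]; exact oneC sgEβ.1 0
        · obtain ⟨δ', hδ', hw⟩ := ZcommP β hb0 hz hcE
          exact Fstar sgEβ hHβ normβ δ' β hδ'.le le_rfl hw
      intro α hα x hx
      rcases hα.lt_or_eq with hαβ | h
      swap
      · subst h; exact hx
      have x1 := mainβ α (lt_succ_iff'.mp hαβ) hx
      have hyp : ∀ γ ≤ β, ZSet (Env (H : Set G) β) γ ⊆ Env (H : Set G) (β + 1) :=
        fun γ hγ => (Zmono sgEβ.1 β γ hγ).trans Zin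
      have x2 := Zrestrict sgE.1 (fun y hy => (mem_Env_succ.mp hy).1) β hyp x1
      exact Zmono sgE.1 (β + 1) β (le_succ' β) x2
    · intro α hα x hx
      rcases hα.lt_or_eq with hαμ | h
      swap
      · subst h; exact hx
      have sgEα : SubG (Env (H : Set G) α) := (IH α hαμ).1
      have sub1 : ZSet (Env (H : Set G) α) α ⊆ Env (H : Set G) μ := by
        intro y hy
        refine (mem_Env_limit h0 hs).mpr fun σ hσ => ?_
        rcases le_or_gt α σ with hc | hc
        · exact ZsubE (IH σ hσ).1.1 σ ((IH σ hσ).2.2.2.2.2 α hc hy)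
        · exact EnvAnti _ α σ hc.le (ZsubE sgEα.1 α hy)
      have hyp : ∀ γ ≤ α, ZSet (Env (H : Set G) α) γ ⊆ Env (H : Set G) μ :=
        fun γ hγ => (Zmono sgEα.1 α γ hγ).trans sub1
      have x2 := Zrestrict sgE.1 (EnvAnti _ μ α hαμ.le) α hyp hx
      exact Zmono sgE.1 μ α hαμ.le x2
  exact ⟨sgE, hHE, restr, kst, norm, main⟩

end Grand
end Stmt12Aux



theorem stmt12 {G : Type*} [Group G] (H : Subgroup G) (α lam : Ordinal) (h : α ≤ lam) :
    ZSet (Env (H : Set G) α) α ⊆ ZSet (Env (H : Set G) lam) lam :=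
  (Stmt12Aux.grand H lam).2.2.2.2.2 α h
end
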